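/- The equation (1/2)·log₂(1 + 2(ηh²s − P_C)/(πeσ²)) = λs, for λ given by λ = ηh²/((2P_C − eπσ²)·ln 2) · W((2P_C − eπσ²)/(e²πσ²)), has a solution s = x₀² with x₀² = (2P_C − eπσ²)/(2ηh²) − (1/(2λ ln 2))·W( −(eπλσ² ln 2 / (ηh²)) · 2^{(λ/(ηh²))(2P_C − eπσ²)} ), where W is the Lambert W function. -/

import Mathlib

lemma aux_te (t : ℝ) (h1 : -1 ≤ t) (h2 : t * Real.exp t = -Real.exp (-1)) : t = -1 := by
  by_contra hne
  have ht : -1 < t := by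
    rcases h1.lt_or_eq with h | h
    · exact h
    · exact absurd h.symm hne
  have h4 : (-(t+1)) + 1 < Real.exp (-(t+1)) := by
    apply Real.add_one_lt_exp
    intro h
    exact hne (by linarith [neg_eq_zero.mp h])
  have h3 : Real.exp (-(t+1)) * Real.exp (t+1) = 1 := by
    rw [← Real.exp_add]; norm_num
  have h5 : Real.exp t * Real.exp 1 = Real.exp (t+1) := by rw [← Real.exp_add]
  have h6 : Real.exp (-1) * Real.exp 1 = 1 := by rw [← Real.exp_add]; norm_num
  have h7 : 0 < Real.exp (t+1) := Real.exp_pos _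
  nlinarith [Real.exp_pos 1, Real.exp_pos t]

/-- The tangency equation `(1/2)log₂(1 + 2(ηh²s − P_C)/(πeσ²)) = λs`, with
`λ = ηh²/((2P_C − eπσ²)ln 2) · W((2P_C − eπσ²)/(e²πσ²))`, has the solution `s = x₀²` given by
`x₀² = (2P_C − eπσ²)/(2ηh²) − (1/(2λ ln 2))·W(−(eπλσ² ln 2/(ηh²))·2^{(λ/(ηh²))(2P_C − eπσ²)})`,
where `W` is the principal branch of the Lambert W function
(satisfying `W(z)e^{W(z)} = z` and `W(z) ≥ −1` for `z ≥ −1/e`). -/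
theorem lambertW_tangency_solution (η h P_C σ2 lam : ℝ) (W : ℝ → ℝ)
    (hη : 0 < η) (hη1 : η < 1) (hh : 0 < h) (hσ2 : 0 < σ2)
    (hPC : P_C > Real.exp 1 * Real.pi * σ2 / 2)
    (hW : ∀ z : ℝ, -Real.exp (-1) ≤ z → W z * Real.exp (W z) = z ∧ -1 ≤ W z)
    (hlam : lam = η * h ^ 2 / ((2 * P_C - Real.exp 1 * Real.pi * σ2) * Real.log 2)
        * W ((2 * P_C - Real.exp 1 * Real.pi * σ2) / (Real.exp 1 ^ 2 * Real.pi * σ2))) :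
    ∀ s : ℝ,
      s = (2 * P_C - Real.exp 1 * Real.pi * σ2) / (2 * η * h ^ 2)
          - (1 / (2 * lam * Real.log 2))
            * W (-(Real.exp 1 * Real.pi * lam * σ2 * Real.log 2 / (η * h ^ 2))
                * (2 : ℝ) ^ ((lam / (η * h ^ 2)) * (2 * P_C - Real.exp 1 * Real.pi * σ2))) →
      (1 / 2) * Real.logb 2
          (1 + 2 * (η * h ^ 2 * s - P_C) / (Real.pi * Real.exp 1 * σ2)) = lam * s := by
  intro s hs
  set A : ℝ := 2 * P_C - Real.exp 1 * Real.pi * σ2 with hA_def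
  set c : ℝ := η * h ^ 2 with hc_def
  have hE : (0:ℝ) < Real.exp 1 := Real.exp_pos 1
  have hπ : (0:ℝ) < Real.pi := Real.pi_pos
  have hA : 0 < A := by simp only [hA_def]; nlinarith
  have hc : 0 < c := by positivity
  have hL2 : 0 < Real.log 2 := Real.log_pos (by norm_num)
  set u : ℝ := A / (Real.exp 1 ^ 2 * Real.pi * σ2) with hu_def
  have hu : 0 < u := by positivity
  obtain ⟨hWu, hWu1⟩ := hW u (by nlinarith [Real.exp_pos (-1:ℝ)])
  set w : ℝ := W u with hw_def
  have hwpos : 0 < w := by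
    by_contra hle
    push_neg at hle
    nlinarith [Real.exp_pos w]
  have hlampos : 0 < lam := by
    rw [hlam]
    exact mul_pos (by positivity) hwpos
  have he2 : Real.exp 2 = Real.exp 1 * Real.exp 1 := by
    rw [← Real.exp_add]; norm_num
  have hEu : Real.exp w = u / w := by
    rw [eq_div_iff hwpos.ne']
    linear_combination hWu
  -- the argument of W in s equals -exp(-1)
  have harg : -(Real.exp 1 * Real.pi * lam * σ2 * Real.log 2 / c)
      * (2 : ℝ) ^ ((lam / c) * A) = -Real.exp (-1) := by
    have hrw : (2 : ℝ) ^ ((lam / c) * A) = Real.exp (Real.log 2 * ((lam / c) * A)) := by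
      rw [Real.rpow_def_of_pos (by norm_num)]
    have hexp_arg : Real.log 2 * ((lam / c) * A) = w := by
      rw [hlam]
      field_simp
    rw [hrw, hexp_arg, Real.exp_neg, hlam, hEu, hu_def]
    field_simp
  obtain ⟨hWz, hWz1⟩ := hW (-Real.exp (-1)) le_rfl
  have hWm1 : W (-Real.exp (-1)) = -1 := aux_te _ hWz1 hWz
  rw [harg, hWm1] at hs
  -- explicit s
  have hs' : s = A / (2 * c) + 1 / (2 * lam * Real.log 2) := by
    rw [hs]; simp only [hc_def]; ring
  have hlamval : lam * (A * Real.log 2) = c * w := by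
    rw [hlam]; field_simp
  -- inner expression equals exp (1 + w)
  have hinner : 1 + 2 * (c * s - P_C) / (Real.pi * Real.exp 1 * σ2)
      = Real.exp (1 + w) := by
    rw [Real.exp_add, hEu, hu_def, hs', hA_def]
    field_simp
    linear_combination (-1)*hlamval + (lam*Real.log 2)*hA_def
  rw [hinner, Real.logb, Real.log_exp, hs']
  field_simp
  linear_combination (-1) * hlamval
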